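/- If (w, g(w)) is an extreme point of epi(g), where g is the infimal convolution of polyhedral convex functions g¹,…,g^K, then w admits exactly one optimal decomposition (w^k) with Σ_k w^k = w and Σ_k g^k(w^k) = g(w). -/

import Mathlib

noncomputable section
open Set

abbrev V (n : ℕ) := EuclideanSpace ℝ (Fin n)

def IsPolyhedron {E : Type*} [AddCommGroup E] [Module ℝ E] (P : Set E) : Prop :=
  ∃ (m : ℕ) (L : Fin m → E →ₗ[ℝ] ℝ) (b : Fin m → ℝ), P = {x | ∀ i, L i x ≤ b i}

def epi {n : ℕ} (g : V n → ℝ) : Set (V n × ℝ) := {p | g p.1 ≤ p.2}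

/-- Each component of an optimal decomposition is an extreme point of its epigraph. -/
lemma comp_extreme (n K : ℕ) (gk : Fin K → V n → ℝ)
    (g : V n → ℝ)
    (hg : ∀ w : V n, IsLeast
      {s | ∃ W : Fin K → V n, (∑ k, W k) = w ∧ s = ∑ k, gk k (W k)} (g w))
    (w : V n)
    (hext : (w, g w) ∈ Set.extremePoints ℝ (epi g))
    (W : Fin K → V n) (hsum : (∑ k, W k) = w) (hval : (∑ k, gk k (W k)) = g w)
    (k : Fin K) :
    (W k, gk k (W k)) ∈ Set.extremePoints ℝ (epi (gk k)) := by
  rw [mem_extremePoints]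
  refine ⟨show gk k (W k) ≤ gk k (W k) from le_rfl, ?_⟩
  rintro ⟨u1, s1⟩ h1 ⟨u2, s2⟩ h2 hseg
  rw [openSegment, Set.mem_setOf_eq] at hseg
  obtain ⟨a, b, ha, hb, hab, heq⟩ := hseg
  set R : V n := w - W k with hR
  set S : ℝ := g w - gk k (W k) with hS
  have hepi : ∀ (u : V n) (s : ℝ), (u, s) ∈ epi (gk k) → (u + R, s + S) ∈ epi g := by
    intro u s hu
    have hmem := (hg (u + R)).2
    have : g (u + R) ≤ ∑ j, gk j (Function.update W k u j) := by
      apply hmem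
      refine ⟨Function.update W k u, ?_, rfl⟩
      rw [Finset.sum_update_of_mem (Finset.mem_univ k),
        Finset.sdiff_singleton_eq_erase,
        Finset.sum_erase_eq_sub (Finset.mem_univ k), hsum]

    have h2 : ∑ j, gk j (Function.update W k u j) = gk k u + S := by
      rw [← Finset.add_sum_erase _ _ (Finset.mem_univ k)]
      have h3 : ∑ j ∈ Finset.univ.erase k, gk j (Function.update W k u j)
          = ∑ j ∈ Finset.univ.erase k, gk j (W j) := by
        apply Finset.sum_congr rfl
        intro j hj
        rw [Function.update_of_ne (Finset.ne_of_mem_erase hj)]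
      rw [h3, Finset.sum_erase_eq_sub (Finset.mem_univ k), hval,
        Function.update_self, hS]
    rw [h2] at this
    have : g (u + R) ≤ s + S := le_trans this (by linarith [hu.out])
    exact this
  have hp1 : (u1 + R, s1 + S) ∈ epi g := hepi u1 s1 h1
  have hp2 : (u2 + R, s2 + S) ∈ epi g := hepi u2 s2 h2
  have heq1 : a • u1 + b • u2 = W k := congrArg Prod.fst heq
  have heq2 : a * s1 + b * s2 = gk k (W k) := congrArg Prod.snd heq
  have hcomb : a • ((u1 + R, s1 + S) : V n × ℝ) + b • (u2 + R, s2 + S) = (w, g w) := by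
    have hRR : a • R + b • R = R := by rw [← add_smul, hab, one_smul]
    have hSS : a * S + b * S = S := by rw [← add_mul, hab, one_mul]
    refine Prod.ext ?_ ?_
    · show a • (u1 + R) + b • (u2 + R) = w
      rw [smul_add, smul_add]
      calc a • u1 + a • R + (b • u2 + b • R) = (a • u1 + b • u2) + (a • R + b • R) := by abel
        _ = W k + R := by rw [heq1, hRR]
        _ = w := by rw [hR]; abel
    · show a * (s1 + S) + b * (s2 + S) = g w
      calc a * (s1 + S) + b * (s2 + S) = (a * s1 + b * s2) + (a * S + b * S) := by ring
        _ = gk k (W k) + S := by rw [heq2, hSS]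
        _ = g w := by rw [hS]; ring
  have hext' := (mem_extremePoints.1 hext).2 _ hp1 _ hp2 ⟨a, b, ha, hb, hab, hcomb⟩
  obtain ⟨e1, e2⟩ := hext'
  have hu1 : u1 + R = w := congrArg Prod.fst e1
  have hs1 : s1 + S = g w := congrArg Prod.snd e1
  have hu2 : u2 + R = w := congrArg Prod.fst e2
  have hs2 : s2 + S = g w := congrArg Prod.snd e2
  constructor
  · refine Prod.ext ?_ ?_
    · show u1 = W k
      have : u1 = w - R := by rw [← hu1]; abel
      rw [this, hR]; abel
    · show s1 = gk k (W k); rw [hS] at hs1; linarith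
  · refine Prod.ext ?_ ?_
    · show u2 = W k
      have : u2 = w - R := by rw [← hu2]; abel
      rw [this, hR]; abel
    · show s2 = gk k (W k); rw [hS] at hs2; linarith

theorem stmt13 (n K : ℕ) (gk : Fin K → V n → ℝ)
    (hconv : ∀ k, ConvexOn ℝ univ (gk k))
    (hpoly : ∀ k, IsPolyhedron (epi (gk k)))
    (g : V n → ℝ)
    (hg : ∀ w : V n, IsLeast
      {s | ∃ W : Fin K → V n, (∑ k, W k) = w ∧ s = ∑ k, gk k (W k)} (g w))
    (w : V n)
    (hext : (w, g w) ∈ Set.extremePoints ℝ (epi g)) :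
    ∃! W : Fin K → V n, (∑ k, W k) = w ∧ (∑ k, gk k (W k)) = g w := by
  obtain ⟨⟨W0, hW0sum, hW0val⟩, hlb⟩ := hg w
  refine ⟨W0, ⟨hW0sum, hW0val.symm⟩, ?_⟩
  -- uniqueness: any other optimal decomposition W1 equals W0
  intro W1 ⟨hW1sum, hW1val⟩
  -- show W1 = W0 by midpoint argument
  have key : ∀ (Wa Wb : Fin K → V n), (∑ k, Wa k) = w → (∑ k, gk k (Wa k)) = g w →
      (∑ k, Wb k) = w → (∑ k, gk k (Wb k)) = g w → Wa = Wb := by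
    intro Wa Wb hsa hva hsb hvb
    set M : Fin K → V n := fun k => (2⁻¹ : ℝ) • Wa k + (2⁻¹ : ℝ) • Wb k with hM
    have hMsum : (∑ k, M k) = w := by
      rw [hM]
      simp only [Finset.sum_add_distrib, ← Finset.smul_sum, hsa, hsb]
      rw [← add_smul]; norm_num
    have hMle : ∀ k, gk k (M k) ≤ 2⁻¹ * gk k (Wa k) + 2⁻¹ * gk k (Wb k) := by
      intro k
      exact (hconv k).2 (mem_univ _) (mem_univ _) (by norm_num) (by norm_num) (by norm_num)
    have hMval : (∑ k, gk k (M k)) = g w := by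
      have h1 : (∑ k, gk k (M k)) ≤ ∑ k, (2⁻¹ * gk k (Wa k) + 2⁻¹ * gk k (Wb k)) :=
        Finset.sum_le_sum fun k _ => hMle k
      have h2 : ∑ k, (2⁻¹ * gk k (Wa k) + 2⁻¹ * gk k (Wb k)) = g w := by
        rw [Finset.sum_add_distrib, ← Finset.mul_sum, ← Finset.mul_sum, hva, hvb]; ring
      have h3 : g w ≤ ∑ k, gk k (M k) := hlb ⟨M, hMsum, rfl⟩
      linarith
    -- termwise equality
    have hterm : ∀ k ∈ Finset.univ, gk k (M k) = 2⁻¹ * gk k (Wa k) + 2⁻¹ * gk k (Wb k) := by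
      rw [← Finset.sum_eq_sum_iff_of_le fun k _ => hMle k]
      rw [hMval, Finset.sum_add_distrib, ← Finset.mul_sum, ← Finset.mul_sum, hva, hvb]; ring
    funext k
    have hExt := comp_extreme n K gk g hg w hext M hMsum hMval k
    have ha : ((Wa k, gk k (Wa k)) : V n × ℝ) ∈ epi (gk k) := show gk k _ ≤ _ from le_rfl
    have hb : ((Wb k, gk k (Wb k)) : V n × ℝ) ∈ epi (gk k) := show gk k _ ≤ _ from le_rfl
    have hcomb : (2⁻¹:ℝ) • ((Wa k, gk k (Wa k)) : V n × ℝ)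
        + (2⁻¹:ℝ) • (Wb k, gk k (Wb k)) = (M k, gk k (M k)) := by
      refine Prod.ext ?_ ?_
      · rfl
      · show (2⁻¹:ℝ) * gk k (Wa k) + 2⁻¹ * gk k (Wb k) = gk k (M k)
        exact (hterm k (Finset.mem_univ k)).symm
    have := (mem_extremePoints.1 hExt).2 _ ha _ hb ⟨2⁻¹, 2⁻¹, by norm_num, by norm_num, by norm_num, hcomb⟩
    have e1 : Wa k = M k := congrArg Prod.fst this.1
    have e2 : Wb k = M k := congrArg Prod.fst this.2
    rw [e1, e2]
  exact key W1 W0 hW1sum hW1val hW0sum hW0val.symm
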